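/- Let G be an extraspecial 2-group and let H, K be non-normal subgroups of G. Then H and K are conjugate in G if and only if HΦ(G) = KΦ(G). -/

import Mathlib

open Subgroup
open scoped commutatorElement

/-- A finite 2-group is extraspecial if its center, derived subgroup and Frattini subgroup
coincide and have order 2. -/
def IsExtraspecial (G : Type*) [Group G] : Prop :=
  Subgroup.center G = commutator G ∧ commutator G = frattini G ∧
    Nat.card (Subgroup.center G) = 2

private noncomputable def linOfAdd2 {V : Type*} [AddCommGroup V] [Module (ZMod 2) V]
    (f : V → ZMod 2) (hf : ∀ x y, f (x + y) = f x + f y) :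
    Module.Dual (ZMod 2) V where
  toFun := f
  map_add' := hf
  map_smul' := by
    intro c x
    have h0 : f 0 = 0 := by
      have := hf 0 0
      rw [add_zero] at this
      exact (left_eq_add.mp this)
    have hc : c = 0 ∨ c = 1 := by revert c; decide
    rcases hc with rfl | rfl
    · simp [h0]
    · simp

open Classical in
private noncomputable def chiFun {G : Type*} [Group G] (H : Subgroup G) (g : G)
    (v : Additive ↥H) : ZMod 2 :=
  if ⁅g, ((Additive.toMul v : ↥H) : G)⁆ = 1 then 0 else 1

open Classical in
private noncomputable def epsFun {G : Type*} [Group G] (H K : Subgroup G)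
    (v : Additive ↥H) : ZMod 2 :=
  if ((Additive.toMul v : ↥H) : G) ∈ K then 0 else 1

private theorem extraspecial_aux {G : Type*} [Group G] [Finite G] (z : G)
    (hzne : z ≠ 1) (hz2 : z * z = 1)
    (hzc : ∀ a : G, a * z = z * a)
    (ccases : ∀ a b : G, ⁅a, b⁆ = 1 ∨ ⁅a, b⁆ = z)
    (hcen : ∀ x : G, (∀ a : G, a * x = x * a) → x = 1 ∨ x = z)
    (H K : Subgroup G) (zH : z ∉ H) (zK : z ∉ K)
    (hdec : ∀ x ∈ H, x ∈ K ∨ x * z ∈ K) :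
    ∃ g : G, Subgroup.map (MulAut.conj g).toMonoidHom H ≤ K := by
  classical
  -- commutators are central
  have ccomm : ∀ a b x : G, x * ⁅a, b⁆ = ⁅a, b⁆ * x := by
    intro a b x
    rcases ccases a b with h | h
    · rw [h, mul_one, one_mul]
    · rw [h]; exact hzc x
  have conj_eq : ∀ g x : G, g * x * g⁻¹ = ⁅g, x⁆ * x := by
    intro g x; rw [commutatorElement_def]; group
  have cmul_left : ∀ a b c : G, ⁅a * b, c⁆ = ⁅a, c⁆ * ⁅b, c⁆ := by
    intro a b c
    calc ⁅a * b, c⁆ = a * ⁅b, c⁆ * (c * a⁻¹ * c⁻¹) := by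
          rw [commutatorElement_def, commutatorElement_def]; group
      _ = ⁅b, c⁆ * ⁅a, c⁆ := by
          rw [ccomm b c a, commutatorElement_def a c]; group
      _ = ⁅a, c⁆ * ⁅b, c⁆ := ccomm a c ⁅b, c⁆
  have cmul_right : ∀ a b c : G, ⁅a, b * c⁆ = ⁅a, b⁆ * ⁅a, c⁆ := by
    intro a b c
    have h1 : ⁅a, b * c⁆ = ⁅b * c, a⁆⁻¹ := (commutatorElement_inv _ _).symm
    rw [h1, cmul_left, mul_inv_rev, commutatorElement_inv, commutatorElement_inv]
    exact ccomm a b ⁅a, c⁆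
  -- squares in H are trivial
  have hsq : ∀ x : G, x ∈ H → x * x = 1 := by
    intro x hx
    have h1 : ∀ a : G, a * (x * x) = (x * x) * a := by
      intro a
      have h2 : ⁅a, x * x⁆ = 1 := by
        rw [cmul_right]
        rcases ccases a x with h | h <;> rw [h]
        · rw [mul_one]
        · exact hz2
      exact commutatorElement_eq_one_iff_mul_comm.mp h2
    rcases hcen _ h1 with h | h
    · exact h
    · exact absurd (h ▸ H.mul_mem hx hx) zH
  -- H is commutative
  have Hcomm : ∀ a b : ↥H, a * b = b * a := by
    intro a b
    have hc : ⁅(a : G), (b : G)⁆ ∈ H := by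
      rw [commutatorElement_def]
      exact H.mul_mem (H.mul_mem (H.mul_mem a.2 b.2) (H.inv_mem a.2)) (H.inv_mem b.2)
    have h1 : ⁅(a : G), (b : G)⁆ = 1 := by
      rcases ccases (a : G) (b : G) with h | h
      · exact h
      · exact absurd (h ▸ hc) zH
    exact Subtype.ext (commutatorElement_eq_one_iff_mul_comm.mp h1)
  letI : CommGroup ↥H := { (inferInstance : Group ↥H) with mul_comm := Hcomm }
  letI : Module (ZMod 2) (Additive ↥H) := AddCommGroup.zmodModule (n := 2) (by
    intro x
    show (2 : ℕ) • x = 0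
    rw [two_nsmul]
    exact congrArg Additive.ofMul
      (Subtype.ext (hsq _ (Additive.toMul x).2)))
  -- arithmetic helper
  have ite_add : ∀ a b c : G, c = a * b → (a = 1 ∨ a = z) → (b = 1 ∨ b = z) →
      (if c = 1 then (0 : ZMod 2) else 1) =
        (if a = 1 then (0 : ZMod 2) else 1) + (if b = 1 then (0 : ZMod 2) else 1) := by
    rintro a b c rfl (rfl | rfl) (rfl | rfl)
    · simp
    · simp [hzne]
    · simp [hzne]
    · rw [hz2, if_pos rfl, if_neg hzne]; decide
  -- the linear forms coming from conjugation
  let χLin : G → Module.Dual (ZMod 2) (Additive ↥H) := fun g =>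
    linOfAdd2 (chiFun H g) (by
      intro x y
      simp only [chiFun]
      exact ite_add _ _ _ (cmul_right g _ _) (ccases _ _) (ccases _ _))
  have notboth : ∀ a : G, a ∈ K → a * z ∈ K → False := by
    intro a h1 h2
    have h3 : a⁻¹ * (a * z) ∈ K := K.mul_mem (K.inv_mem h1) h2
    rw [show a⁻¹ * (a * z) = z by group] at h3
    exact zK h3
  have hswap1 : ∀ a b : G, (a * z) * b = (a * b) * z := by
    intro a b
    calc (a * z) * b = a * (z * b) * 1 := by group
      _ = a * (b * z) * 1 := by rw [← hzc b]
      _ = (a * b) * z := by group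
  have hswap2 : ∀ a b : G, (a * z) * (b * z) = (a * b) * (z * z) := by
    intro a b
    calc (a * z) * (b * z) = a * (z * b) * z := by group
      _ = a * (b * z) * z := by rw [← hzc b]
      _ = (a * b) * (z * z) := by group
  -- the linear form coming from K
  have εadd : ∀ x y : Additive ↥H, epsFun H K (x + y) = epsFun H K x + epsFun H K y := by
    intro x y
    have hxyc : ((Additive.toMul (x + y) : ↥H) : G)
        = ((Additive.toMul x : ↥H) : G) * ((Additive.toMul y : ↥H) : G) := rfl
    set a : G := ((Additive.toMul x : ↥H) : G) with ha
    set b : G := ((Additive.toMul y : ↥H) : G) with hb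
    have haH : a ∈ H := (Additive.toMul x).2
    have hbH : b ∈ H := (Additive.toMul y).2
    simp only [epsFun, hxyc, ← ha, ← hb]
    by_cases hA : a ∈ K <;> by_cases hB : b ∈ K
    · have h1 : a * b ∈ K := K.mul_mem hA hB
      simp [h1, hA, hB]
    · have hbz : b * z ∈ K := (hdec b hbH).resolve_left hB
      have h1 : a * b ∉ K := by
        intro h
        exact notboth _ h (by rw [mul_assoc]; exact K.mul_mem hA hbz)
      simp [h1, hA, hB]
    · have haz : a * z ∈ K := (hdec a haH).resolve_left hA
      have h1 : a * b ∉ K := by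
        intro h
        have h2 : (a * z) * b ∈ K := K.mul_mem haz hB
        rw [hswap1] at h2
        exact notboth _ h h2
      simp [h1, hA, hB]
    · have haz : a * z ∈ K := (hdec a haH).resolve_left hA
      have hbz : b * z ∈ K := (hdec b hbH).resolve_left hB
      have h1 : a * b ∈ K := by
        have h2 : (a * z) * (b * z) ∈ K := K.mul_mem haz hbz
        rwa [hswap2, hz2, mul_one] at h2
      rw [if_pos h1, if_neg hA, if_neg hB]; decide
  let εLin : Module.Dual (ZMod 2) (Additive ↥H) := linOfAdd2 (epsFun H K) εadd
  -- the submodule of forms realized by conjugation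
  let Wsub : Submodule (ZMod 2) (Module.Dual (ZMod 2) (Additive ↥H)) :=
    { carrier := Set.range χLin
      zero_mem' := ⟨(1 : G), by
        ext v
        show chiFun H 1 v = 0
        simp [chiFun, commutatorElement_def]⟩
      add_mem' := by
        rintro f₁ f₂ ⟨g₁, rfl⟩ ⟨g₂, rfl⟩
        refine ⟨g₁ * g₂, ?_⟩
        ext v
        show chiFun H (g₁ * g₂) v = chiFun H g₁ v + chiFun H g₂ v
        simp only [chiFun]
        exact ite_add _ _ _ (cmul_left g₁ g₂ _) (ccases _ _) (ccases _ _)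
      smul_mem' := by
        intro c f hf
        have hc : c = 0 ∨ c = 1 := by revert c; decide
        rcases hc with rfl | rfl
        · rw [zero_smul]
          exact ⟨(1 : G), by
            ext v
            show chiFun H 1 v = 0
            simp [chiFun, commutatorElement_def]⟩
        · rw [one_smul]; exact hf }
  -- duality: εLin lies in Wsub
  haveI : Finite (Module.Dual (ZMod 2) (Additive ↥H)) :=
    Finite.of_injective _ (DFunLike.coe_injective (F := Module.Dual (ZMod 2) (Additive ↥H)))
  haveI : Finite ↥Wsub := Subtype.finite
  haveI : FiniteDimensional (ZMod 2) ↥Wsub := Module.finite_iff_finite.mpr inferInstance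
  have hεW : εLin ∈ Wsub := by
    rw [← Subspace.dualCoannihilator_dualAnnihilator_eq (W := Wsub),
      Submodule.mem_dualAnnihilator]
    intro v hv
    rw [Submodule.mem_dualCoannihilator] at hv
    have hcom : ∀ a : G, ⁅a, ((Additive.toMul v : ↥H) : G)⁆ = 1 := by
      intro a
      have h1 := hv (χLin a) ⟨a, rfl⟩
      by_contra hne
      rw [show (χLin a) v = chiFun H a v from rfl] at h1
      simp [chiFun, hne] at h1
    have h2 : ((Additive.toMul v : ↥H) : G) = 1 ∨ ((Additive.toMul v : ↥H) : G) = z :=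
      hcen _ (fun a => commutatorElement_eq_one_iff_mul_comm.mp (hcom a))
    rcases h2 with h2 | h2
    · show epsFun H K v = 0
      simp [epsFun, h2, K.one_mem]
    · exact absurd (h2 ▸ (Additive.toMul v).2) zH
  obtain ⟨g, hg⟩ := hεW
  refine ⟨g, ?_⟩
  rintro x ⟨h, hh, rfl⟩
  have hval : chiFun H g (Additive.ofMul (⟨h, hh⟩ : ↥H))
      = epsFun H K (Additive.ofMul (⟨h, hh⟩ : ↥H)) := by
    rw [show chiFun H g (Additive.ofMul (⟨h, hh⟩ : ↥H))
        = (χLin g) (Additive.ofMul (⟨h, hh⟩ : ↥H)) from rfl, hg]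
    rfl
  have hconj : (MulAut.conj g).toMonoidHom h = ⁅g, h⁆ * h := by
    rw [MulEquiv.coe_toMonoidHom, MulAut.conj_apply, conj_eq]
  rw [hconj]
  by_cases hKm : h ∈ K
  · have h1 : ⁅g, h⁆ = 1 := by
      by_contra hne
      simp [chiFun, epsFun, hKm, hne] at hval
    rw [h1, one_mul]; exact hKm
  · have hz' : h * z ∈ K := (hdec h hh).resolve_left hKm
    have h1 : ⁅g, h⁆ = z := by
      rcases ccases g h with h1 | h1
      · exfalso; simp [chiFun, epsFun, hKm, h1] at hval
      · exact h1
    rw [h1, ← hzc h]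
    exact hz'

theorem conj_iff_sup_frattini_eq (G : Type*) [Group G] [Finite G] (hG : IsExtraspecial G)
    (H K : Subgroup G) (hH : ¬ H.Normal) (hK : ¬ K.Normal) :
    (∃ g : G, Subgroup.map (MulAut.conj g).toMonoidHom H = K) ↔
      H ⊔ frattini G = K ⊔ frattini G := by
  classical
  obtain ⟨hZC, hCF, hcard2⟩ := hG
  have hZF : Subgroup.center G = frattini G := hZC.trans hCF
  obtain ⟨w, hw1, hwu⟩ := (Nat.card_eq_two_iff' (1 : Subgroup.center G)).mp hcard2
  set z : G := (w : G) with hzdef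
  have hz : z ∈ Subgroup.center G := w.2
  have hzne : z ≠ 1 := fun h => hw1 (Subtype.ext h)
  have hmem : ∀ x ∈ Subgroup.center G, x = 1 ∨ x = z := by
    intro x hx
    by_cases h : (⟨x, hx⟩ : Subgroup.center G) = 1
    · left; exact congrArg Subtype.val h
    · right; exact congrArg Subtype.val (hwu ⟨x, hx⟩ h)
  have hz2 : z * z = 1 := by
    by_cases h : w * w = 1
    · exact congrArg Subtype.val h
    · exfalso
      have h2 : w * w = w := hwu (w * w) h
      exact hw1 (mul_eq_left.mp h2)
  have zcomm : ∀ a : G, a * z = z * a := Subgroup.mem_center_iff.mp hz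
  have ccen : ∀ a b : G, ⁅a, b⁆ ∈ Subgroup.center G := by
    intro a b
    rw [hZC, _root_.commutator_def]
    exact Subgroup.commutator_mem_commutator (Subgroup.mem_top a) (Subgroup.mem_top b)
  have ccases : ∀ a b : G, ⁅a, b⁆ = 1 ∨ ⁅a, b⁆ = z := fun a b => hmem _ (ccen a b)
  have hcen : ∀ x : G, (∀ a : G, a * x = x * a) → x = 1 ∨ x = z := fun x hx =>
    hmem x (Subgroup.mem_center_iff.mpr hx)
  have conj_eq : ∀ g x : G, g * x * g⁻¹ = ⁅g, x⁆ * x := by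
    intro g x; rw [commutatorElement_def]; group
  have normal_of_z : ∀ N : Subgroup G, z ∈ N → N.Normal := by
    intro N hzN
    constructor
    intro n hn g
    rw [conj_eq]
    rcases ccases g n with h | h
    · rw [h, one_mul]; exact hn
    · rw [h]; exact N.mul_mem (h ▸ hzN) hn
  have zH : z ∉ H := fun h => hH (normal_of_z H h)
  have zK : z ∉ K := fun h => hK (normal_of_z K h)
  have zinv : z⁻¹ = z := inv_eq_of_mul_eq_one_right hz2
  have hswap1 : ∀ a b : G, (a * z) * b = (a * b) * z := by
    intro a b
    calc (a * z) * b = a * (z * b) * 1 := by group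
      _ = a * (b * z) * 1 := by rw [← zcomm b]
      _ = (a * b) * z := by group
  have hswap2 : ∀ a b : G, (a * z) * (b * z) = (a * b) * (z * z) := by
    intro a b
    calc (a * z) * (b * z) = a * (z * b) * z := by group
      _ = a * (b * z) * z := by rw [← zcomm b]
      _ = (a * b) * (z * z) := by group
  -- decomposition of a sup with the center
  have hdecomp : ∀ (L : Subgroup G) (x : G), x ∈ L ⊔ Subgroup.center G →
      x ∈ L ∨ x * z ∈ L := by
    intro L x hx
    have hS : L ⊔ Subgroup.center G ≤
        { carrier := {x : G | x ∈ L ∨ x * z ∈ L}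
          one_mem' := Or.inl L.one_mem
          mul_mem' := by
            rintro a b (ha | ha) (hb | hb)
            · exact Or.inl (L.mul_mem ha hb)
            · refine Or.inr ?_
              rw [mul_assoc]
              exact L.mul_mem ha hb
            · refine Or.inr ?_
              have h2 : (a * z) * b ∈ L := L.mul_mem ha hb
              rwa [hswap1] at h2
            · refine Or.inl ?_
              have h2 : (a * z) * (b * z) ∈ L := L.mul_mem ha hb
              rwa [hswap2, hz2, mul_one] at h2
          inv_mem' := by
            rintro a (ha | ha)
            · exact Or.inl (L.inv_mem ha)
            · refine Or.inr ?_
              have h2 : (a * z)⁻¹ ∈ L := L.inv_mem ha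
              rw [mul_inv_rev, zinv, ← zcomm a⁻¹] at h2
              exact h2 } := by
      refine sup_le (fun y hy => Or.inl hy) (fun y hy => ?_)
      rcases hmem y hy with rfl | rfl
      · exact Or.inl L.one_mem
      · exact Or.inr (by rw [hz2]; exact L.one_mem)
    exact hS hx
  -- conj preserved facts
  have hmapmul : ∀ (a b : G) (L : Subgroup G),
      Subgroup.map (MulAut.conj a).toMonoidHom (Subgroup.map (MulAut.conj b).toMonoidHom L)
        = Subgroup.map (MulAut.conj (a * b)).toMonoidHom L := by
    intro a b L
    rw [Subgroup.map_map]
    congr 1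
    ext x
    simp [mul_assoc]
  have hmapone : ∀ L : Subgroup G, Subgroup.map (MulAut.conj (1 : G)).toMonoidHom L = L := by
    intro L
    ext x
    simp [Subgroup.mem_map]
  have hmapcard : ∀ (a : G) (L : Subgroup G),
      Nat.card (Subgroup.map (MulAut.conj a).toMonoidHom L) = Nat.card L := by
    intro a L
    exact (Nat.card_congr (Subgroup.equivMapOfInjective L _
      (MulAut.conj a).injective).toEquiv).symm
  constructor
  · rintro ⟨g, rfl⟩
    rw [← hZF]
    have hmapZ : Subgroup.map (MulAut.conj g).toMonoidHom (Subgroup.center G)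
        = Subgroup.center G := by
      ext x
      simp only [Subgroup.mem_map, MulEquiv.coe_toMonoidHom, MulAut.conj_apply]
      constructor
      · rintro ⟨y, hy, rfl⟩
        rwa [Subgroup.mem_center_iff.mp hy g, mul_assoc, mul_inv_cancel, mul_one]
      · intro hx
        exact ⟨x, hx, by rw [Subgroup.mem_center_iff.mp hx g, mul_assoc,
          mul_inv_cancel, mul_one]⟩
    have hN : (H ⊔ Subgroup.center G).Normal :=
      normal_of_z _ (le_sup_right (α := Subgroup G) hz)
    have hinv : Subgroup.map (MulAut.conj g).toMonoidHom (H ⊔ Subgroup.center G)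
        = H ⊔ Subgroup.center G := by
      apply le_antisymm
      · rintro x ⟨n, hn, rfl⟩
        exact hN.conj_mem n hn g
      · intro n hn
        exact ⟨g⁻¹ * n * g, by
          have := hN.conj_mem n hn g⁻¹
          rwa [inv_inv] at this, by
          simp [mul_assoc]⟩
    rw [← hinv, Subgroup.map_sup, hmapZ]
  · intro hsup
    rw [← hZF] at hsup
    have hdH : ∀ x ∈ H, x ∈ K ∨ x * z ∈ K := by
      intro x hx
      refine hdecomp K x ?_
      rw [← hsup]
      exact le_sup_left (α := Subgroup G) hx
    have hdK : ∀ x ∈ K, x ∈ H ∨ x * z ∈ H := by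
      intro x hx
      refine hdecomp H x ?_
      rw [hsup]
      exact le_sup_left (α := Subgroup G) hx
    obtain ⟨g₁, h₁⟩ := extraspecial_aux z hzne hz2 zcomm ccases hcen H K zH zK hdH
    obtain ⟨g₂, h₂⟩ := extraspecial_aux z hzne hz2 zcomm ccases hcen K H zK zH hdK
    have h3 : Subgroup.map (MulAut.conj (g₂ * g₁)).toMonoidHom H ≤ H := by
      rw [← hmapmul]
      exact le_trans (Subgroup.map_mono h₁) h₂
    have h4 : Subgroup.map (MulAut.conj (g₂ * g₁)).toMonoidHom H = H :=
      Subgroup.eq_of_le_of_card_ge h3 (by rw [hmapcard])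
    refine ⟨g₂⁻¹, ?_⟩
    apply le_antisymm
    · have h5 : H ≤ Subgroup.map (MulAut.conj g₂).toMonoidHom K := by
        conv_lhs => rw [← h4]
        rw [← hmapmul]
        exact Subgroup.map_mono h₁
      have h6 := Subgroup.map_mono (f := (MulAut.conj g₂⁻¹).toMonoidHom) h5
      rwa [hmapmul, inv_mul_cancel, hmapone] at h6
    · have h7 := Subgroup.map_mono (f := (MulAut.conj g₂⁻¹).toMonoidHom) h₂
      rwa [hmapmul, inv_mul_cancel, hmapone] at h7
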